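/- A graded sequence $\{p_n\}$ is $W$-Sheffer if and only if there exists a graded sequence $\{d_l\}$ of polynomials such that $(\varphi\cdot_W\psi)(p_n/w_n) = \sum_{k=0}^n \varphi(p_k/w_k)\,\psi(d_{n-k}/w_{n-k})$ for all linear functionals $\varphi,\psi \in \mathbb{F}[x]^*$. -/

import Mathlib

open Polynomial

/-- `χ = φ ·_W ψ`, i.e. `χ(xⁿ/wₙ) = ∑_{k ≤ n} φ(xᵏ/wₖ) ψ(x^{n-k}/w_{n-k})`. -/
def mulProp {F : Type*} [Field F] (w : ℕ → F)
    (φ ψ χ : F[X] →ₗ[F] F) : Prop :=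
  ∀ n : ℕ, χ ((w n)⁻¹ • X ^ n) =
    ∑ k ∈ Finset.range (n + 1),
      φ ((w k)⁻¹ • X ^ k) * ψ ((w (n - k))⁻¹ • X ^ (n - k))

namespace Stmt14Aux

variable {F : Type*} [Field F]

/-- The basic `W`-lowering operator: `Xⁿ ↦ (wₙ/wₙ₋₁) Xⁿ⁻¹`. -/
noncomputable def Qw (w : ℕ → F) : F[X] →ₗ[F] F[X] :=
  (Polynomial.basisMonomials F).constr F
    fun n => if n = 0 then 0 else (w n / w (n - 1)) • X ^ (n - 1)

lemma basisMonomials_apply (n : ℕ) : (Polynomial.basisMonomials F) n = X ^ n := by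
  have := congrFun (Polynomial.coe_basisMonomials F) n
  rw [this, ← X_pow_eq_monomial]

lemma Qw_X_pow (w : ℕ → F) (n : ℕ) :
    Qw w (X ^ n : F[X]) = if n = 0 then 0 else (w n / w (n - 1)) • X ^ (n - 1) := by
  rw [← basisMonomials_apply, Qw, Module.Basis.constr_basis]

lemma Qw_X_pow_succ (w : ℕ → F) (n : ℕ) :
    Qw w (X ^ (n + 1) : F[X]) = (w (n + 1) / w n) • X ^ n := by
  simp [Qw_X_pow]

lemma Qw_one (w : ℕ → F) : Qw w (1 : F[X]) = 0 := by
  simpa using Qw_X_pow w 0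

lemma coeff_Qw (w : ℕ → F) (q : F[X]) (k : ℕ) :
    (Qw w q).coeff k = (w (k + 1) / w k) * q.coeff (k + 1) := by
  induction q using Polynomial.induction_on' with
  | add f g hf hg => simp [hf, hg, mul_add]
  | monomial n a =>
    rw [← smul_X_eq_monomial, map_smul]
    cases n with
    | zero => simp [Qw_one, coeff_one, Nat.succ_ne_zero]
    | succ m =>
      rw [Qw_X_pow_succ]
      simp only [coeff_smul, coeff_X_pow, smul_eq_mul]
      by_cases hkm : m = k
      · subst hkm; simp [mul_comm]
      · simp [hkm, Ne.symm hkm, fun h => hkm (Nat.succ_injective h)]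

lemma degree_Qw_lt (w : ℕ → F) (n : ℕ) (q : F[X]) (hq : q.degree < (n + 1 : ℕ)) :
    (Qw w q).degree < (n : ℕ) := by
  rw [degree_lt_iff_coeff_zero] at hq ⊢
  intro m hm
  rw [coeff_Qw, hq (m + 1) (by exact_mod_cast by exact_mod_cast
    (by exact_mod_cast Nat.succ_le_succ (by exact_mod_cast hm) : ((n+1 : ℕ):WithBot ℕ) ≤ (m+1 : ℕ)))]
  ring

lemma Qw_pow_X_pow (w : ℕ → F) (hw : ∀ n, w n ≠ 0) (j m : ℕ) :
    (Qw w ^ j) (X ^ m : F[X]) =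
      if j ≤ m then (w m / w (m - j)) • X ^ (m - j) else 0 := by
  induction j generalizing m with
  | zero => simp [div_self (hw m)]
  | succ i ih =>
    rw [pow_succ, Module.End.mul_apply]
    cases m with
    | zero => simp [Qw_one]
    | succ m' =>
      rw [Qw_X_pow_succ, map_smul, ih m']
      by_cases h : i ≤ m'
      · rw [if_pos h, if_pos (Nat.succ_le_succ h), smul_smul]
        have : m' + 1 - (i + 1) = m' - i := by omega
        rw [this]
        congr 1
        field_simp [hw m', hw (m' - i), hw (m' + 1)]
      · rw [if_neg h, if_neg (by omega), smul_zero]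

lemma degree_Qw_pow_lt (w : ℕ → F) (j : ℕ) (q : F[X]) (d : ℕ) (hq : q.degree ≤ (d : ℕ)) :
    ((Qw w ^ (j + 1)) q).degree < (d : ℕ) := by
  induction j generalizing q with
  | zero =>
    rw [pow_one]
    exact degree_Qw_lt w d q (lt_of_le_of_lt hq (by exact_mod_cast Nat.lt_succ_self d))
  | succ i ih =>
    rw [pow_succ, Module.End.mul_apply]
    exact ih _ (le_of_lt (degree_Qw_lt w d q
      (lt_of_le_of_lt hq (by exact_mod_cast Nat.lt_succ_self d))))

variable (p : ℕ → F[X])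

lemma p_ne_zero (hp : ∀ n, (p n).degree = n) (n : ℕ) : p n ≠ 0 := by
  intro h
  have := hp n
  rw [h, degree_zero] at this
  exact absurd this (by simp)

lemma coeff_self_ne_zero (hp : ∀ n, (p n).degree = n) (n : ℕ) : (p n).coeff n ≠ 0 := by
  have hnd : (p n).natDegree = n := natDegree_eq_of_degree_eq_some (hp n)
  intro h
  apply p_ne_zero p hp n
  apply leadingCoeff_eq_zero.mp
  rwa [leadingCoeff, hnd]

lemma coeff_p_eq_zero (hp : ∀ n, (p n).degree = n) {n m : ℕ} (h : n < m) :
    (p n).coeff m = 0 :=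
  coeff_eq_zero_of_degree_lt (by rw [hp n]; exact_mod_cast h)

lemma mem_span_p (hp : ∀ n, (p n).degree = n) :
    ∀ (n : ℕ) (q : F[X]), q.degree < (n : ℕ) → q ∈ Submodule.span F (p '' Set.Iio n) := by
  intro n
  induction n with
  | zero =>
    intro q hq
    have : q = 0 := by
      rw [← degree_eq_bot]
      exact Nat.WithBot.lt_zero_iff.mp (by exact_mod_cast hq)
    simp [this]
  | succ n ih =>
    intro q hq
    set a := q.coeff n with ha
    set lc := (p n).coeff n with hlc
    have hlcne : lc ≠ 0 := coeff_self_ne_zero p hp n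
    have hq' : (q - (a / lc) • p n).degree < (n : ℕ) := by
      rw [degree_lt_iff_coeff_zero]
      intro m hm
      have hm' : n ≤ m := by exact_mod_cast hm
      rw [coeff_sub, coeff_smul, smul_eq_mul]
      rcases eq_or_lt_of_le hm' with h | h
      · subst h
        rw [← ha, ← hlc, div_mul_cancel₀ _ hlcne, sub_self]
      · rw [coeff_eq_zero_of_degree_lt (lt_of_lt_of_le hq (by exact_mod_cast h)),
          coeff_p_eq_zero p hp h, mul_zero, sub_zero]
    have h1 : q - (a / lc) • p n ∈ Submodule.span F (p '' Set.Iio (n + 1)) :=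
      Submodule.span_mono (Set.image_mono (fun x hx => lt_trans hx (Nat.lt_succ_self n)))
        (ih _ hq')
    have h2 : p n ∈ Submodule.span F (p '' Set.Iio (n + 1)) :=
      Submodule.subset_span ⟨n, Nat.lt_succ_self n, rfl⟩
    have := Submodule.add_mem _ h1 (Submodule.smul_mem _ (a / lc) h2)
    simpa using this

lemma p_linearIndependent (hp : ∀ n, (p n).degree = n) : LinearIndependent F p := by
  rw [linearIndependent_iff]
  intro l hl
  by_contra hne
  have hsupp : l.support.Nonempty := Finsupp.support_nonempty_iff.mpr hne
  set m := l.support.max' hsupp with hm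
  have hmem : m ∈ l.support := l.support.max'_mem hsupp
  have : (Finsupp.linearCombination F p l).coeff m = l m * (p m).coeff m := by
    rw [Finsupp.linearCombination_apply, Finsupp.sum, finset_sum_coeff]
    rw [Finset.sum_eq_single m]
    · rw [coeff_smul, smul_eq_mul]
    · intro k hk hkm
      have hklt : k < m := lt_of_le_of_ne (l.support.le_max' k hk) hkm
      rw [coeff_smul, coeff_p_eq_zero p hp hklt, smul_zero]
    · intro h; exact absurd hmem h
  rw [hl, coeff_zero] at this
  rcases mul_eq_zero.mp this.symm with h | h
  · exact Finsupp.mem_support_iff.mp hmem h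
  · exact coeff_self_ne_zero p hp m h

lemma p_span_top (hp : ∀ n, (p n).degree = n) :
    ⊤ ≤ Submodule.span F (Set.range p) := by
  intro q _
  have : q.degree < ((q.natDegree + 1 : ℕ) : WithBot ℕ) :=
    lt_of_le_of_lt degree_le_natDegree (by exact_mod_cast Nat.lt_succ_self _)
  exact Submodule.span_mono (Set.image_subset_range p _) (mem_span_p p hp _ q this)

/-- The basis of `F[X]` given by `p`. -/
noncomputable def pB (hp : ∀ n, (p n).degree = n) : Module.Basis ℕ F F[X] :=
  Module.Basis.mk (p_linearIndependent p hp) (p_span_top p hp)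

lemma pB_apply (hp : ∀ n, (p n).degree = n) (n : ℕ) : pB p hp n = p n := Module.Basis.mk_apply _ _ _

/-- The `k`-th coordinate functional in the basis `p`. -/
noncomputable def prc (hp : ∀ n, (p n).degree = n) (k : ℕ) : F[X] →ₗ[F] F :=
  (Finsupp.lapply k) ∘ₗ ((pB p hp).repr : F[X] →ₗ[F] (ℕ →₀ F))

lemma prc_apply (hp : ∀ n, (p n).degree = n) (k : ℕ) (q : F[X]) :
    prc p hp k q = (pB p hp).repr q k := rfl

lemma prc_p (hp : ∀ n, (p n).degree = n) (k n : ℕ) :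
    prc p hp k (p n) = if n = k then 1 else 0 := by
  rw [prc_apply, ← pB_apply p hp, Module.Basis.repr_self]
  exact Finsupp.single_apply

lemma prc_sum_smul (hp : ∀ n, (p n).degree = n) (k N : ℕ) (a : ℕ → F) :
    prc p hp k (∑ i ∈ Finset.range N, a i • p i) = if k < N then a k else 0 := by
  rw [map_sum]
  simp only [map_smul, prc_p p hp, smul_eq_mul]
  by_cases hk : k < N
  · rw [if_pos hk, Finset.sum_eq_single k]
    · simp
    · intro b _ hb; simp [hb]
    · intro h; exact absurd (Finset.mem_range.mpr hk) h
  · rw [if_neg hk, Finset.sum_eq_zero]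
    intro b hb
    have : b ≠ k := fun h => hk (h ▸ Finset.mem_range.mp hb)
    simp [this]

lemma eq_of_prc (hp : ∀ n, (p n).degree = n) (q q' : F[X])
    (h : ∀ k, prc p hp k q = prc p hp k q') : q = q' := by
  have : (pB p hp).repr q = (pB p hp).repr q' := Finsupp.ext fun k => h k
  exact (pB p hp).repr.injective this

lemma prc_eq_zero_of_degree_lt (hp : ∀ n, (p n).degree = n) {n : ℕ} {q : F[X]}
    (hq : q.degree < (n : ℕ)) {k : ℕ} (hk : n ≤ k) : prc p hp k q = 0 := by
  have hmem : q ∈ Submodule.span F (pB p hp '' Set.Iio n) := by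
    have := mem_span_p p hp n q hq
    rwa [show p '' Set.Iio n = pB p hp '' Set.Iio n by
      apply Set.image_congr; intro x _; rw [pB_apply]] at this
  have := Module.Basis.repr_support_subset_of_mem_span (pB p hp) (Set.Iio n) hmem
  rw [prc_apply]
  by_contra hne
  exact absurd (this (Finsupp.mem_support_iff.mpr hne)) (by simpa using hk)

lemma p_expansion (hp : ∀ n, (p n).degree = n) {n : ℕ} {q : F[X]} (hq : q.degree < (n : ℕ)) :
    q = ∑ k ∈ Finset.range n, prc p hp k q • p k := by
  have h1 := (pB p hp).linearCombination_repr q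
  rw [Finsupp.linearCombination_apply, Finsupp.sum] at h1
  have hsub : ((pB p hp).repr q).support ⊆ Finset.range n := by
    intro k hk
    rw [Finset.mem_range]
    by_contra hkn
    exact absurd (prc_eq_zero_of_degree_lt p hp hq (Nat.le_of_not_lt hkn))
      (by rw [prc_apply]; exact Finsupp.mem_support_iff.mp hk)
  calc q = ∑ k ∈ ((pB p hp).repr q).support, ((pB p hp).repr q) k • (pB p hp) k := h1.symm
    _ = ∑ k ∈ Finset.range n, ((pB p hp).repr q) k • (pB p hp) k := by
        apply Finset.sum_subset hsub
        intro k _ hk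
        rw [Finsupp.notMem_support_iff.mp hk, zero_smul]
    _ = ∑ k ∈ Finset.range n, prc p hp k q • p k := by
        apply Finset.sum_congr rfl
        intro k _
        rw [prc_apply, pB_apply]

section Main

variable (w : ℕ → F) (hw0 : w 0 = 1) (hw : ∀ n, w n ≠ 0)
variable (p : ℕ → F[X]) (hp : ∀ n, (p n).degree = n)
variable (Q : F[X] →ₗ[F] F[X]) (hQ0 : Q (p 0) = 0)
variable (hQ : ∀ n : ℕ, Q (p (n + 1)) = (w (n + 1) / w n) • p n)

include hp hQ0 in
lemma Q_one : Q (1 : F[X]) = 0 := by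
  have h0 : p 0 = C ((p 0).coeff 0) := eq_C_of_degree_le_zero (le_of_eq (hp 0))
  have hc : (p 0).coeff 0 ≠ 0 := coeff_self_ne_zero p hp 0
  have : (1 : F[X]) = ((p 0).coeff 0)⁻¹ • p 0 := by
    rw [h0]
    simp only [coeff_C_zero, smul_C, smul_eq_mul, inv_mul_cancel₀ hc, C_1]
  rw [this, map_smul, hQ0, smul_zero]

include hp hQ0 hQ in
lemma Q_degree_lt (n : ℕ) (q : F[X]) (hq : q.degree < ((n + 1 : ℕ) : WithBot ℕ)) :
    (Q q).degree < (n : ℕ) := by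
  rw [p_expansion p hp hq, map_sum]
  apply lt_of_le_of_lt (degree_sum_le _ _)
  apply (Finset.sup_lt_iff (show (⊥ : WithBot ℕ) < (n : ℕ) from by exact_mod_cast WithBot.bot_lt_coe n)).mpr
  intro k hk
  rw [map_smul]
  apply lt_of_le_of_lt (degree_smul_le _ _)
  cases k with
  | zero => rw [hQ0]; exact lt_of_le_of_lt degree_zero.le (WithBot.bot_lt_coe n)
  | succ j =>
    rw [hQ j]
    apply lt_of_le_of_lt (degree_smul_le _ _)
    rw [hp j]
    exact_mod_cast Nat.lt_of_succ_le (Nat.lt_succ_iff.mp (Finset.mem_range.mp hk))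

lemma X_expansion (N : ℕ) (q : F[X]) (hq : q.degree < ((N + 1 : ℕ) : WithBot ℕ)) :
    q = ∑ m ∈ Finset.range (N + 1), q.coeff m • (X : F[X]) ^ m := by
  have hnd : q.natDegree < N + 1 := by
    by_cases h0 : q = 0
    · simp [h0]
    · exact natDegree_lt_iff_degree_lt h0 |>.mpr (by exact_mod_cast hq)
  conv_lhs => rw [q.as_sum_range' (N + 1) hnd]
  apply Finset.sum_congr rfl
  intro m _
  rw [smul_X_eq_monomial]


variable (T : F → F[X] →ₗ[F] F[X])
variable (hT : ∀ (h : F) (n : ℕ), T h (X ^ n) =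
      ∑ k ∈ Finset.range (n + 1),
        (w n * h ^ (n - k) / (w (n - k) * w k)) • (X : F[X]) ^ k)

include hw hT in
lemma T_one_X_pow (N m : ℕ) (hm : m ≤ N) :
    T 1 (X ^ m : F[X]) = ∑ j ∈ Finset.range (N + 1), (w j)⁻¹ • (Qw w ^ j) (X ^ m : F[X]) := by
  have h1 : ∑ j ∈ Finset.range (N + 1), (w j)⁻¹ • (Qw w ^ j) (X ^ m : F[X])
      = ∑ j ∈ Finset.range (m + 1), (w j)⁻¹ • (Qw w ^ j) (X ^ m : F[X]) := by
    symm
    apply Finset.sum_subset (Finset.range_subset_range.mpr (Nat.succ_le_succ hm))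
    intro j _ hj
    rw [Qw_pow_X_pow w hw, if_neg (fun h => hj (Finset.mem_range.mpr (Nat.lt_succ_of_le h))),
      smul_zero]
  rw [h1, hT 1 m]
  conv_lhs => rw [← Finset.sum_range_reflect]
  apply Finset.sum_congr rfl
  intro j hj
  have hjm : j ≤ m := Nat.lt_succ_iff.mp (Finset.mem_range.mp hj)
  simp only [Nat.add_sub_cancel]
  have e2 : m - (m - j) = j := by omega
  rw [e2, Qw_pow_X_pow w hw, if_pos hjm, smul_smul, one_pow]
  congr 1
  field_simp

include hw hT in
lemma T_one_eq (N : ℕ) (q : F[X]) (hq : q.degree < ((N + 1 : ℕ) : WithBot ℕ)) :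
    T 1 q = ∑ j ∈ Finset.range (N + 1), (w j)⁻¹ • (Qw w ^ j) q := by
  have step : ∀ m ∈ Finset.range (N + 1),
      T 1 (q.coeff m • (X : F[X]) ^ m) =
        ∑ j ∈ Finset.range (N + 1), (w j)⁻¹ • (Qw w ^ j) (q.coeff m • (X : F[X]) ^ m) := by
    intro m hm
    rw [map_smul, T_one_X_pow w hw T hT N m (Nat.lt_succ_iff.mp (Finset.mem_range.mp hm)),
      Finset.smul_sum]
    apply Finset.sum_congr rfl
    intro j _
    rw [map_smul, smul_comm]
  conv_lhs => rw [X_expansion N q hq]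
  conv_rhs => rw [X_expansion N q hq]
  rw [map_sum, Finset.sum_congr rfl step, Finset.sum_comm]
  apply Finset.sum_congr rfl
  intro j _
  rw [map_sum, Finset.smul_sum]

include hp hQ0 hQ in
lemma Q_comm_pow (n : ℕ)
    (out : ∀ m, m < n → Q (Qw w (X ^ m)) = Qw w (Q (X ^ m))) :
    ∀ j m, m ≤ n → Q ((Qw w ^ (j + 1)) (X ^ m)) - (Qw w ^ (j + 1)) (Q (X ^ m))
      = (Qw w ^ j) (Q (Qw w (X ^ m)) - Qw w (Q (X ^ m))) := by
  intro j
  induction j with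
  | zero => intro m _; simp [pow_one]
  | succ i ih =>
    intro m hm
    cases m with
    | zero =>
      have hq1 : Q (1 : F[X]) = 0 := Q_one p hp Q hQ0
      have hqw : Qw w (1 : F[X]) = 0 := Qw_one w
      simp [hq1, hqw, pow_succ, Module.End.mul_apply]
    | succ m' =>
      have hm'' : m' ≤ n := Nat.le_of_succ_le hm
      have hc := ih m' hm''
      rw [sub_eq_zero.mpr (out m' (Nat.lt_of_succ_le hm)), map_zero] at hc
      have hc' : Q ((Qw w ^ (i + 1)) ((X : F[X]) ^ m'))
          = (Qw w ^ (i + 1)) (Q ((X : F[X]) ^ m')) := sub_eq_zero.mp hc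
      have e1 : (Qw w ^ (i + 1 + 1)) ((X : F[X]) ^ (m' + 1))
          = (w (m' + 1) / w m') • (Qw w ^ (i + 1)) ((X : F[X]) ^ m') := by
        rw [pow_succ, Module.End.mul_apply, Qw_X_pow_succ, map_smul]
      have e3 : Qw w (Q ((X : F[X]) ^ (m' + 1)))
          = (w (m' + 1) / w m') • Q ((X : F[X]) ^ m')
            - (Q (Qw w ((X : F[X]) ^ (m' + 1))) - Qw w (Q ((X : F[X]) ^ (m' + 1)))) := by
        rw [Qw_X_pow_succ, map_smul, sub_sub_cancel]
      have e2 : (Qw w ^ (i + 1 + 1)) (Q ((X : F[X]) ^ (m' + 1)))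
          = (w (m' + 1) / w m') • (Qw w ^ (i + 1)) (Q ((X : F[X]) ^ m'))
            - (Qw w ^ (i + 1))
                (Q (Qw w ((X : F[X]) ^ (m' + 1))) - Qw w (Q ((X : F[X]) ^ (m' + 1)))) := by
        conv_lhs => rw [pow_succ, Module.End.mul_apply, e3]
        rw [map_sub, map_smul]
      rw [e1, e2, map_smul, hc']
      abel

include hw0 hw hp hQ0 hQ hT in
lemma comm_QwX (hcomm : ∀ h : F, Q ∘ₗ T h = T h ∘ₗ Q) :
    ∀ n : ℕ, Q (Qw w (X ^ n)) = Qw w (Q (X ^ n)) := by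
  intro n
  induction n using Nat.strong_induction_on with
  | _ n out =>
    cases n with
    | zero =>
      have hq1 : Q ((X : F[X]) ^ 0) = 0 := by simpa using Q_one p hp Q hQ0
      have hqw : Qw w ((X : F[X]) ^ 0) = 0 := by simpa using Qw_one w
      rw [hq1, hqw, map_zero, map_zero]
    | succ n' =>
      set N := n' + 1 with hN
      have hdX : ((X : F[X]) ^ N).degree < ((N + 1 : ℕ) : WithBot ℕ) := by
        rw [degree_X_pow]; exact_mod_cast Nat.lt_succ_self N
      have hdQ : (Q ((X : F[X]) ^ N)).degree < ((N + 1 : ℕ) : WithBot ℕ) := by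
        refine lt_trans (Q_degree_lt w p hp Q hQ0 hQ N _ hdX) ?_
        exact_mod_cast Nat.lt_succ_self N
      have h0 := congrArg (fun f : F[X] →ₗ[F] F[X] => f (X ^ N)) (hcomm 1)
      simp only [LinearMap.comp_apply] at h0
      rw [T_one_eq w hw T hT N _ hdX, T_one_eq w hw T hT N _ hdQ, map_sum] at h0
      simp only [map_smul] at h0
      have h1 : ∑ j ∈ Finset.range (N + 1),
          (w j)⁻¹ • (Q ((Qw w ^ j) ((X : F[X]) ^ N)) - (Qw w ^ j) (Q ((X : F[X]) ^ N))) = 0 := by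
        simp only [smul_sub, Finset.sum_sub_distrib, h0, sub_self]
      set r := Q (Qw w ((X : F[X]) ^ N)) - Qw w (Q ((X : F[X]) ^ N)) with hr
      have hpow := Q_comm_pow w p hp Q hQ0 hQ N out
      rw [Finset.sum_range_succ'] at h1
      have e0 : (w 0)⁻¹ • (Q ((Qw w ^ 0) ((X : F[X]) ^ N)) - (Qw w ^ 0) (Q ((X : F[X]) ^ N)))
          = 0 := by simp
      rw [e0, add_zero] at h1
      have h2 : ∑ i ∈ Finset.range N, (w (i + 1))⁻¹ • (Qw w ^ i) r = 0 := by
        rw [← h1]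
        apply Finset.sum_congr rfl
        intro i _
        rw [hpow i N le_rfl]
      by_contra hne
      have hrne : r ≠ 0 := sub_ne_zero_of_ne hne
      have hcoeff := congrArg (fun q : F[X] => q.coeff r.natDegree) h2
      simp only [finset_sum_coeff, coeff_smul, coeff_zero, smul_eq_mul] at hcoeff
      rw [Finset.sum_range_succ'] at hcoeff
      have hz : ∀ i ∈ Finset.range n', (w (i + 1 + 1))⁻¹ * ((Qw w ^ (i + 1)) r).coeff r.natDegree
          = 0 := by
        intro i _
        rw [coeff_eq_zero_of_degree_lt (degree_Qw_pow_lt w i r r.natDegree degree_le_natDegree),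
          mul_zero]
      rw [Finset.sum_congr rfl hz, Finset.sum_const_zero, zero_add, pow_zero,
        Module.End.one_apply] at hcoeff
      have : r.coeff r.natDegree = 0 := by
        rcases mul_eq_zero.mp hcoeff with h | h
        · exact absurd (inv_eq_zero.mp h) (hw 1)
        · exact h
      exact hrne (leadingCoeff_eq_zero.mp this)

include hw0 hw hp hQ0 hQ hT in
lemma comm_Qw (hcomm : ∀ h : F, Q ∘ₗ T h = T h ∘ₗ Q) : Q ∘ₗ Qw w = Qw w ∘ₗ Q := by
  apply Module.Basis.ext (Polynomial.basisMonomials F)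
  intro n
  rw [basisMonomials_apply]
  simp only [LinearMap.comp_apply]
  exact comm_QwX w hw0 hw p hp Q hQ0 hQ T hT hcomm n


/-- Convolution powers of a sequence. -/
def Dp (D : ℕ → F) : ℕ → ℕ → F
  | 0, l => if l = 0 then 1 else 0
  | j + 1, l => ∑ i ∈ Finset.range (l + 1), D i * Dp D j (l - i)

lemma Dp_eq_zero (D : ℕ → F) (hD0 : D 0 = 0) : ∀ j l, l < j → Dp D j l = 0 := by
  intro j
  induction j with
  | zero => intro l hl; omega
  | succ j ih =>
    intro l hl
    rw [Dp, Finset.sum_eq_zero]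
    intro i hi
    rcases Nat.eq_zero_or_pos i with h0 | h1
    · rw [h0, hD0, zero_mul]
    · rw [ih (l - i) (by have := Finset.mem_range.mp hi; omega), mul_zero]

lemma Dp_diag (D : ℕ → F) (hD0 : D 0 = 0) : ∀ j, Dp D j j = (D 1) ^ j := by
  intro j
  induction j with
  | zero => simp [Dp]
  | succ j ih =>
    rw [Dp, Finset.sum_eq_single 1]
    · rw [Nat.add_sub_cancel, ih, pow_succ, mul_comm]
    · intro i hi hne
      rcases Nat.eq_zero_or_pos i with h0 | h1
      · rw [h0, hD0, zero_mul]
      · rw [Dp_eq_zero D hD0 j (j + 1 - i) (by have := Finset.mem_range.mp hi; omega), mul_zero]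
    · intro h; exact absurd (Finset.mem_range.mpr (by omega)) h

/-- The "Toeplitz symbol" of `Qw` in the basis `p`. -/
noncomputable def Dc (w : ℕ → F) (p : ℕ → F[X]) (hp : ∀ n, (p n).degree = n) : ℕ → F :=
  fun l => prc p hp 0 (Qw w (p l)) / w l

include hp in
lemma Qw_p_zero : Qw w (p 0) = 0 := by
  have h : (Qw w (p 0)).degree < ((0 : ℕ) : WithBot ℕ) :=
    degree_Qw_lt w 0 (p 0) (by rw [hp 0]; exact_mod_cast Nat.lt_succ_self 0)
  rw [← degree_eq_bot]
  exact Nat.WithBot.lt_zero_iff.mp (by exact_mod_cast h)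

include hp in
lemma Dc_zero : Dc w p hp 0 = 0 := by
  rw [Dc, Qw_p_zero w p hp, map_zero, zero_div]

include hw0 hw hp hQ0 hQ in
lemma Qw_p (hcomm : Q ∘ₗ Qw w = Qw w ∘ₗ Q) :
    ∀ n, Qw w (p n) = ∑ k ∈ Finset.range (n + 1),
      ((w n / w k) * Dc w p hp (n - k)) • p k := by
  intro n
  induction n with
  | zero => simp [Qw_p_zero w p hp, Dc_zero w p hp]
  | succ n ih =>
    have hdeg : (Qw w (p (n + 1))).degree < ((n + 1 : ℕ) : WithBot ℕ) :=
      degree_Qw_lt w (n + 1) (p (n + 1)) (by rw [hp (n + 1)]; exact_mod_cast Nat.lt_succ_self _)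
    set c : ℕ → F := fun k => prc p hp k (Qw w (p (n + 1))) with hc
    have hexp : Qw w (p (n + 1)) = ∑ k ∈ Finset.range (n + 1), c k • p k :=
      p_expansion p hp hdeg
    have hQQ : Q (Qw w (p (n + 1))) = Qw w (Q (p (n + 1))) := by
      have := LinearMap.ext_iff.mp hcomm (p (n + 1))
      simpa using this
    have hleft : Q (Qw w (p (n + 1)))
        = ∑ i ∈ Finset.range n, (c (i + 1) * (w (i + 1) / w i)) • p i := by
      conv_lhs => rw [hexp]
      rw [map_sum, Finset.sum_range_succ']
      simp only [map_smul]
      rw [hQ0, smul_zero, add_zero]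
      apply Finset.sum_congr rfl
      intro i _
      rw [hQ i, smul_smul]
    have hright : Qw w (Q (p (n + 1)))
        = ∑ k ∈ Finset.range (n + 1),
            ((w (n + 1) / w n) * ((w n / w k) * Dc w p hp (n - k))) • p k := by
      rw [hQ n, map_smul, ih, Finset.smul_sum]
      simp only [smul_smul]
    have heq := hleft.symm.trans (hQQ.trans hright)
    have hco : ∀ k, k < n →
        c (k + 1) * (w (k + 1) / w k)
          = (w (n + 1) / w n) * ((w n / w k) * Dc w p hp (n - k)) := by
      intro k hk
      have h2 := congrArg (prc p hp k) heq
      rw [prc_sum_smul, prc_sum_smul, if_pos hk, if_pos (by omega)] at h2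
      exact h2
    apply eq_of_prc p hp
    intro k0
    rw [prc_sum_smul]
    have hlhs : prc p hp k0 (Qw w (p (n + 1))) = c k0 := rfl
    rw [hlhs]
    by_cases hk0 : k0 < n + 2
    · rw [if_pos hk0]
      cases k0 with
      | zero =>
        have hDc : Dc w p hp (n + 1) = c 0 / w (n + 1) := rfl
        rw [Nat.sub_zero, hDc, hw0]
        rw [div_one, mul_comm, div_eq_mul_inv, mul_assoc, inv_mul_cancel₀ (hw (n + 1)), mul_one]
      | succ k =>
        rcases Nat.lt_or_ge k n with hkn | hkn
        · have h3 := hco k hkn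
          have h4 : n + 1 - (k + 1) = n - k := by omega
          have hprod : (w (k + 1) / w k) * (w k / w (k + 1)) = 1 := by
            rw [div_mul_div_comm, mul_comm, div_self (mul_ne_zero (hw k) (hw (k + 1)))]
          rw [h4]
          calc c (k + 1) = c (k + 1) * ((w (k + 1) / w k) * (w k / w (k + 1))) := by
                rw [hprod, mul_one]
            _ = (c (k + 1) * (w (k + 1) / w k)) * (w k / w (k + 1)) := by ring
            _ = (w (n + 1) / w n * (w n / w k * Dc w p hp (n - k))) * (w k / w (k + 1)) := by
                rw [h3]
            _ = (w (n + 1) / w (k + 1)) * Dc w p hp (n - k) := by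
                have h1 := hw k; have h2 := hw n; have h3' := hw (k + 1); have h4' := hw (n + 1)
                field_simp
        · have hkeq : k = n := by omega
          subst hkeq
          have hz : c (k + 1) = 0 :=
            prc_eq_zero_of_degree_lt p hp hdeg (le_refl (k + 1))
          rw [hz, Nat.sub_self, Dc_zero w p hp, mul_zero]
    · rw [if_neg hk0]
      exact prc_eq_zero_of_degree_lt p hp hdeg (by omega)

include hw hp in
lemma Qw_pow_p
    (hQwp : ∀ n, Qw w (p n) = ∑ k ∈ Finset.range (n + 1),
      ((w n / w k) * Dc w p hp (n - k)) • p k) :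
    ∀ j n, (Qw w ^ j) (p n) = ∑ k ∈ Finset.range (n + 1),
      ((w n / w k) * Dp (Dc w p hp) j (n - k)) • p k := by
  intro j
  induction j with
  | zero =>
    intro n
    rw [pow_zero, Module.End.one_apply, Finset.sum_eq_single n]
    · rw [Nat.sub_self, Dp, if_pos rfl, mul_one, div_self (hw n), one_smul]
    · intro k hk hne
      rw [Dp, if_neg (by have := Finset.mem_range.mp hk; omega), mul_zero, zero_smul]
    · intro h; exact absurd (Finset.mem_range.mpr (Nat.lt_succ_self n)) h
  | succ j ih =>
    intro n
    have e : (Qw w ^ (j + 1)) (p n) = (Qw w ^ j) (Qw w (p n)) := by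
      rw [pow_succ, Module.End.mul_apply]
    rw [e, hQwp n, map_sum]
    simp only [map_smul, ih]
    apply eq_of_prc p hp
    intro k0
    rw [prc_sum_smul, map_sum]
    simp only [map_smul, prc_sum_smul, smul_eq_mul]
    by_cases hk0n : k0 < n + 1
    · rw [if_pos hk0n]
      have hsub : Finset.Ico k0 (n + 1) ⊆ Finset.range (n + 1) := by
        intro x hx; rw [Finset.mem_range]; exact (Finset.mem_Ico.mp hx).2
      rw [← Finset.sum_subset hsub (by
        intro x hx hnx
        rw [Finset.mem_range] at hx
        rw [Finset.mem_Ico, not_and_or] at hnx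
        rw [if_neg (by omega), mul_zero])]
      rw [Finset.sum_Ico_eq_sum_range]
      have hterm : ∀ i ∈ Finset.range (n + 1 - k0),
          (w n / w (k0 + i) * Dc w p hp (n - (k0 + i))) *
            (if k0 < k0 + i + 1 then w (k0 + i) / w k0 * Dp (Dc w p hp) j (k0 + i - k0) else 0)
          = (w n / w k0) * (Dc w p hp (n - k0 - i) * Dp (Dc w p hp) j i) := by
        intro i hi
        rw [if_pos (by omega)]
        have e1 : k0 + i - k0 = i := by omega
        have e2 : n - (k0 + i) = n - k0 - i := by omega
        rw [e1, e2]
        have h1 := hw k0; have h2 := hw n; have h3 := hw (k0 + i)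
        field_simp
      rw [Finset.sum_congr rfl hterm, ← Finset.mul_sum]
      congr 1
      have e3 : n + 1 - k0 = (n - k0) + 1 := by omega
      rw [e3, Dp]
      conv_rhs => rw [← Finset.sum_range_reflect]
      apply Finset.sum_congr rfl
      intro i hi
      have hi' : i ≤ n - k0 := Nat.lt_succ_iff.mp (Finset.mem_range.mp hi)
      simp only [Nat.add_sub_cancel]
      have e4 : n - k0 - (n - k0 - i) = i := by omega
      rw [e4]
    · rw [if_neg hk0n, Finset.sum_eq_zero]
      intro m hm
      rw [if_neg (by have := Finset.mem_range.mp hm; omega), mul_zero]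


variable (φ ψ χ : F[X] →ₗ[F] F)

include hw in
lemma chi_X_pow (hmul : mulProp w φ ψ χ) (N m : ℕ) (hm : m ≤ N) :
    χ ((X : F[X]) ^ m) = ∑ j ∈ Finset.range (N + 1),
      ψ ((w j)⁻¹ • (X : F[X]) ^ j) * φ ((Qw w ^ j) ((X : F[X]) ^ m)) := by
  have hL : χ ((X : F[X]) ^ m) = w m *
      ∑ k ∈ Finset.range (m + 1),
        φ ((w k)⁻¹ • (X : F[X]) ^ k) * ψ ((w (m - k))⁻¹ • (X : F[X]) ^ (m - k)) := by
    rw [← hmul m, map_smul, smul_eq_mul, ← mul_assoc, mul_inv_cancel₀ (hw m), one_mul]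
  rw [hL]
  have htrunc : ∑ j ∈ Finset.range (N + 1),
      ψ ((w j)⁻¹ • (X : F[X]) ^ j) * φ ((Qw w ^ j) ((X : F[X]) ^ m))
      = ∑ j ∈ Finset.range (m + 1),
        ψ ((w j)⁻¹ • (X : F[X]) ^ j) * φ ((Qw w ^ j) ((X : F[X]) ^ m)) := by
    symm
    apply Finset.sum_subset (Finset.range_subset_range.mpr (Nat.succ_le_succ hm))
    intro j _ hj
    rw [Qw_pow_X_pow w hw, if_neg (fun hle => hj (Finset.mem_range.mpr (Nat.lt_succ_of_le hle))),
      map_zero, mul_zero]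
  rw [htrunc, Finset.mul_sum]
  conv_lhs => rw [← Finset.sum_range_reflect]
  apply Finset.sum_congr rfl
  intro j hj
  have hjm : j ≤ m := Nat.lt_succ_iff.mp (Finset.mem_range.mp hj)
  simp only [Nat.add_sub_cancel]
  have e1 : m - (m - j) = j := by omega
  rw [e1, Qw_pow_X_pow w hw, if_pos hjm]
  simp only [map_smul, smul_eq_mul]
  have h1 := hw (m - j)
  field_simp

include hw in
lemma chi_eq (hmul : mulProp w φ ψ χ) (N : ℕ) (q : F[X])
    (hq : q.degree < ((N + 1 : ℕ) : WithBot ℕ)) :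
    χ q = ∑ j ∈ Finset.range (N + 1),
      ψ ((w j)⁻¹ • (X : F[X]) ^ j) * φ ((Qw w ^ j) q) := by
  conv_lhs => rw [X_expansion N q hq]
  conv_rhs => rw [X_expansion N q hq]
  rw [map_sum]
  have step : ∀ m ∈ Finset.range (N + 1),
      χ (q.coeff m • (X : F[X]) ^ m)
        = ∑ j ∈ Finset.range (N + 1), q.coeff m •
          (ψ ((w j)⁻¹ • (X : F[X]) ^ j) * φ ((Qw w ^ j) ((X : F[X]) ^ m))) := by
    intro m hm
    rw [map_smul, smul_eq_mul,
      chi_X_pow w hw φ ψ χ hmul N m (Nat.lt_succ_iff.mp (Finset.mem_range.mp hm)),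
      Finset.mul_sum]
    apply Finset.sum_congr rfl
    intro j _
    rw [smul_eq_mul]
  rw [Finset.sum_congr rfl step, Finset.sum_comm]
  apply Finset.sum_congr rfl
  intro j _
  rw [map_sum, map_sum, Finset.mul_sum]
  apply Finset.sum_congr rfl
  intro m _
  simp only [map_smul, smul_eq_mul]
  ring

/-- The conjugate graded sequence `d`. -/
noncomputable def dd (w : ℕ → F) (p : ℕ → F[X]) (hp : ∀ n, (p n).degree = n) : ℕ → F[X] :=
  fun l => ∑ j ∈ Finset.range (l + 1), (w l * Dp (Dc w p hp) j l / w j) • (X : F[X]) ^ j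

lemma coeff_sum_smul_X_pow (N : ℕ) (a : ℕ → F) (k : ℕ) :
    (∑ j ∈ Finset.range N, a j • (X : F[X]) ^ j).coeff k = if k < N then a k else 0 := by
  rw [finset_sum_coeff]
  simp only [coeff_smul, coeff_X_pow, smul_eq_mul]
  by_cases hk : k < N
  · rw [if_pos hk, Finset.sum_eq_single k]
    · simp
    · intro b _ hb; simp [Ne.symm hb]
    · intro h; exact absurd (Finset.mem_range.mpr hk) h
  · rw [if_neg hk, Finset.sum_eq_zero]
    intro b hb
    have : k ≠ b := fun h => hk (h ▸ Finset.mem_range.mp hb)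
    simp [this]

include hw hp in
lemma Dc_one_ne_zero : Dc w p hp 1 ≠ 0 := by
  have hq0 : (Qw w (p 1)).degree ≤ 0 := by
    have := degree_Qw_lt w 1 (p 1) (by rw [hp 1]; exact_mod_cast Nat.lt_succ_self 1)
    exact Nat.WithBot.lt_one_iff_le_zero.mp (by exact_mod_cast this)
  have hcoe : (Qw w (p 1)).coeff 0 ≠ 0 := by
    rw [coeff_Qw]
    exact mul_ne_zero (div_ne_zero (hw 1) (hw 0)) (coeff_self_ne_zero p hp 1)
  have hp0 : (p 0).coeff 0 ≠ 0 := coeff_self_ne_zero p hp 0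
  obtain ⟨b, hb⟩ : ∃ b, p 0 = C b := ⟨_, eq_C_of_degree_le_zero (le_of_eq (hp 0))⟩
  obtain ⟨a, ha⟩ : ∃ a, Qw w (p 1) = C a := ⟨_, eq_C_of_degree_le_zero hq0⟩
  have hbne : b ≠ 0 := by rw [hb] at hp0; simpa using hp0
  have hane : a ≠ 0 := by rw [ha] at hcoe; simpa using hcoe
  have hrepr : Qw w (p 1) = (a / b) • p 0 := by
    rw [ha, hb, smul_C, smul_eq_mul, div_mul_cancel₀ _ hbne]
  have hprc : prc p hp 0 (Qw w (p 1)) = a / b := by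
    rw [hrepr, map_smul, prc_p p hp, if_pos rfl, smul_eq_mul, mul_one]
  rw [Dc, hprc]
  exact div_ne_zero (div_ne_zero hane hbne) (hw 1)

include hw hp in
lemma dd_degree (l : ℕ) : (dd w p hp l).degree = l := by
  apply degree_eq_of_le_of_coeff_ne_zero
  · apply le_trans (degree_sum_le _ _)
    apply Finset.sup_le
    intro j hj
    apply le_trans (degree_smul_le _ _)
    rw [degree_X_pow]
    exact_mod_cast Nat.lt_succ_iff.mp (Finset.mem_range.mp hj)
  · rw [dd, coeff_sum_smul_X_pow, if_pos (Nat.lt_succ_self l), mul_comm,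
      mul_div_assoc, div_self (hw l), mul_one]
    rw [Dp_diag (Dc w p hp) (Dc_zero w p hp)]
    exact pow_ne_zero l (Dc_one_ne_zero w hw p hp)

include hw hp in
lemma psi_dd (n l : ℕ) (hl : l ≤ n) :
    ψ ((w l)⁻¹ • dd w p hp l)
      = ∑ j ∈ Finset.range (n + 1), Dp (Dc w p hp) j l * ψ ((w j)⁻¹ • (X : F[X]) ^ j) := by
  have htrunc : ∑ j ∈ Finset.range (n + 1), Dp (Dc w p hp) j l * ψ ((w j)⁻¹ • (X : F[X]) ^ j)
      = ∑ j ∈ Finset.range (l + 1), Dp (Dc w p hp) j l * ψ ((w j)⁻¹ • (X : F[X]) ^ j) := by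
    symm
    apply Finset.sum_subset (Finset.range_subset_range.mpr (Nat.succ_le_succ hl))
    intro j _ hj
    have hjl : l < j := by
      by_contra hcon
      push_neg at hcon
      exact hj (Finset.mem_range.mpr (by omega))
    rw [Dp_eq_zero (Dc w p hp) (Dc_zero w p hp) j l hjl, zero_mul]
  rw [htrunc, dd, map_smul, smul_eq_mul, map_sum, Finset.mul_sum]
  apply Finset.sum_congr rfl
  intro j _
  simp only [map_smul, smul_eq_mul]
  have h1 := hw j
  have h2 := hw l
  field_simp

include hw hw0 hp in
lemma forward_main
    (hQwp : ∀ n, Qw w (p n) = ∑ k ∈ Finset.range (n + 1),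
      ((w n / w k) * Dc w p hp (n - k)) • p k)
    (hmul : mulProp w φ ψ χ) (n : ℕ) :
    χ ((w n)⁻¹ • p n) = ∑ k ∈ Finset.range (n + 1),
      φ ((w k)⁻¹ • p k) * ψ ((w (n - k))⁻¹ • dd w p hp (n - k)) := by
  have hdeg : (p n).degree < ((n + 1 : ℕ) : WithBot ℕ) := by
    rw [hp n]; exact_mod_cast Nat.lt_succ_self n
  rw [map_smul, smul_eq_mul, chi_eq w hw φ ψ χ hmul n (p n) hdeg]
  have step : ∀ j ∈ Finset.range (n + 1),
      ψ ((w j)⁻¹ • (X : F[X]) ^ j) * φ ((Qw w ^ j) (p n))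
        = ∑ k ∈ Finset.range (n + 1),
            ψ ((w j)⁻¹ • (X : F[X]) ^ j) * (((w n / w k) * Dp (Dc w p hp) j (n - k)) * φ (p k)) := by
    intro j _
    rw [Qw_pow_p w hw p hp hQwp j n, map_sum, Finset.mul_sum]
    apply Finset.sum_congr rfl
    intro k _
    simp only [map_smul, smul_eq_mul]
  rw [Finset.sum_congr rfl step, Finset.sum_comm, Finset.mul_sum]
  apply Finset.sum_congr rfl
  intro k hk
  rw [psi_dd w hw p hp ψ n (n - k) (Nat.sub_le n k), Finset.mul_sum, Finset.mul_sum]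
  apply Finset.sum_congr rfl
  intro j _
  simp only [map_smul, smul_eq_mul]
  have hs : ∀ A B C : F, (w n)⁻¹ * (A * (w n / w k * B * C)) = (w k)⁻¹ * C * (B * A) := by
    intro A B C
    rw [div_eq_mul_inv]
    have h1 : (w n)⁻¹ * w n = 1 := inv_mul_cancel₀ (hw n)
    calc (w n)⁻¹ * (A * (w n * (w k)⁻¹ * B * C))
        = ((w n)⁻¹ * w n) * (A * ((w k)⁻¹ * B * C)) := by ring
      _ = (w k)⁻¹ * C * (B * A) := by rw [h1]; ring
  exact hs _ _ _


include hw hT in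
lemma mulprop_T (h : F) (φ' : F[X] →ₗ[F] F) :
    mulProp w φ' (Polynomial.leval h) (φ' ∘ₗ T h) := by
  intro n
  rw [LinearMap.comp_apply, map_smul, map_smul, smul_eq_mul, hT h n, map_sum, Finset.mul_sum]
  apply Finset.sum_congr rfl
  intro k hk
  simp only [map_smul, smul_eq_mul, Polynomial.leval_apply, eval_pow, eval_X]
  rw [div_eq_mul_inv, mul_inv]
  have h1 : (w n)⁻¹ * w n = 1 := inv_mul_cancel₀ (hw n)
  calc (w n)⁻¹ * (w n * h ^ (n - k) * ((w (n - k))⁻¹ * (w k)⁻¹) * φ' (X ^ k))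
      = ((w n)⁻¹ * w n) * (h ^ (n - k) * ((w (n - k))⁻¹ * (w k)⁻¹) * φ' (X ^ k)) := by ring
    _ = (w k)⁻¹ * φ' (X ^ k) * ((w (n - k))⁻¹ * h ^ (n - k)) := by rw [h1]; ring

include hw hw0 hp hQ0 hQ hT in
lemma backward (d : ℕ → F[X])
    (hmain : ∀ φ' ψ' χ' : F[X] →ₗ[F] F, mulProp w φ' ψ' χ' →
      ∀ n : ℕ, χ' ((w n)⁻¹ • p n) = ∑ k ∈ Finset.range (n + 1),
        φ' ((w k)⁻¹ • p k) * ψ' ((w (n - k))⁻¹ • d (n - k))) (h : F) :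
    Q ∘ₗ T h = T h ∘ₗ Q := by
  have hTp : ∀ n, T h (p n) = ∑ k ∈ Finset.range (n + 1),
      (w n * (d (n - k)).eval h / (w (n - k) * w k)) • p k := by
    intro n
    apply eq_of_prc p hp
    intro k0
    have h1 := hmain (prc p hp k0) (Polynomial.leval h) ((prc p hp k0) ∘ₗ T h)
      (mulprop_T w hw T hT h (prc p hp k0)) n
    rw [LinearMap.comp_apply, map_smul, map_smul, smul_eq_mul] at h1
    have h2 : prc p hp k0 (T h (p n)) = w n * ((w n)⁻¹ * prc p hp k0 (T h (p n))) := by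
      rw [← mul_assoc, mul_inv_cancel₀ (hw n), one_mul]
    rw [h2, h1, map_sum, Finset.mul_sum]
    apply Finset.sum_congr rfl
    intro k _
    simp only [map_smul, smul_eq_mul, Polynomial.leval_apply]
    rw [div_eq_mul_inv, mul_inv]
    ring
  apply Module.Basis.ext (pB p hp)
  intro n
  simp only [LinearMap.comp_apply, pB_apply]
  cases n with
  | zero =>
    rw [hQ0, map_zero, hTp 0, Finset.sum_range_one, map_smul, hQ0, smul_zero]
  | succ n =>
    rw [hTp (n + 1), map_sum, hQ n, map_smul, hTp n, Finset.smul_sum,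
      Finset.sum_range_succ']
    simp only [map_smul]
    rw [hQ0, smul_zero, add_zero]
    apply Finset.sum_congr rfl
    intro i _
    rw [hQ i, smul_smul, smul_smul]
    congr 1
    have e : n + 1 - (i + 1) = n - i := by omega
    rw [e]
    have h1 := hw (i + 1)
    have h2 := hw n
    have h3 := hw i
    have h4 := hw (n - i)
    field_simp

end Main
end Stmt14Aux

/-- A graded sequence `{pₙ}` is `W`-Sheffer iff there is a graded sequence
`{dₗ}` such that `(φ ·_W ψ)(pₙ/wₙ) = ∑_{k ≤ n} φ(pₖ/wₖ) ψ(d_{n-k}/w_{n-k})`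
for all linear functionals `φ, ψ`. -/
theorem stmt14 {F : Type*} [Field F] (w : ℕ → F) (hw0 : w 0 = 1)
    (hw : ∀ n, w n ≠ 0)
    (p : ℕ → F[X]) (hp : ∀ n, (p n).degree = n)
    (Q : F[X] →ₗ[F] F[X]) (hQ0 : Q (p 0) = 0)
    (hQ : ∀ n : ℕ, Q (p (n + 1)) = (w (n + 1) / w n) • p n)
    (T : F → F[X] →ₗ[F] F[X])
    (hT : ∀ (h : F) (n : ℕ), T h (X ^ n) =
      ∑ k ∈ Finset.range (n + 1),
        (w n * h ^ (n - k) / (w (n - k) * w k)) • (X : F[X]) ^ k) :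
    (∀ h : F, Q ∘ₗ T h = T h ∘ₗ Q) ↔
      ∃ d : ℕ → F[X], (∀ l, (d l).degree = l) ∧
        ∀ φ ψ χ : F[X] →ₗ[F] F, mulProp w φ ψ χ →
          ∀ n : ℕ, χ ((w n)⁻¹ • p n) =
            ∑ k ∈ Finset.range (n + 1),
              φ ((w k)⁻¹ • p k) * ψ ((w (n - k))⁻¹ • d (n - k)) := by
  constructor
  · intro hcomm
    have hQQw : Q ∘ₗ Stmt14Aux.Qw w = Stmt14Aux.Qw w ∘ₗ Q :=
      Stmt14Aux.comm_Qw w hw0 hw p hp Q hQ0 hQ T hT hcomm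
    have hQwp := Stmt14Aux.Qw_p w hw0 hw p hp Q hQ0 hQ hQQw
    exact ⟨Stmt14Aux.dd w p hp, fun l => Stmt14Aux.dd_degree w hw p hp l,
      fun φ ψ χ hmul n => Stmt14Aux.forward_main w hw0 hw p hp φ ψ χ hQwp hmul n⟩
  · rintro ⟨d, hd, hmain⟩ h
    exact Stmt14Aux.backward w hw0 hw p hp Q hQ0 hQ T hT d hmain h
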